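/- Let N be a rooted phylogenetic network on a finite set X. Then the normalisation Ñ of N is a normal network on X: every vertex of Ñ is visible in Ñ, and Ñ has no shortcuts. -/

import Mathlib

/-!
Formalisation framework for rooted phylogenetic networks.

A network is represented as a directed graph on an ambient vertex type `V`:
a vertex set `verts`, a root vertex `root`, and an arc relation `arc`.
-/

structure Net (V : Type*) where
  verts : Set V
  root : V
  arc : V → V → Prop

namespace Net

variable {V : Type*} {W : Type*}

/-- `N.reach u v` means there is a (possibly empty) directed path from `u` to `v`. -/
def reach (N : Net V) : V → V → Prop := Relation.ReflTransGen N.arc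

/-- The in-degree of a vertex. -/
noncomputable def inDeg (N : Net V) (v : V) : ℕ := {u | N.arc u v}.ncard

/-- The out-degree of a vertex. -/
noncomputable def outDeg (N : Net V) (v : V) : ℕ := {w | N.arc v w}.ncard

/-- The leaves of `N`: the vertices of out-degree 0. -/
def leaves (N : Net V) : Set V := {v ∈ N.verts | N.outDeg v = 0}

/-- `N.IsPathFrom u v l` : the list `l` is a directed path in `N` from `u` to `v`
(consecutive entries joined by arcs; a one-element list is the empty path). -/
def IsPathFrom (N : Net V) (u v : V) (l : List V) : Prop :=
  l.Chain' N.arc ∧ l.head? = some u ∧ l.getLast? = some v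

/-- A vertex is visible if some leaf is such that every directed path from the
root to that leaf passes through the vertex. -/
def Visible (N : Net V) (x : V) : Prop :=
  x ∈ N.verts ∧ ∃ y ∈ N.leaves, ∀ l : List V, N.IsPathFrom N.root y l → x ∈ l

/-- A subdividing vertex is one of in-degree 1 and out-degree 1. -/
def Subdividing (N : Net V) (v : V) : Prop := N.inDeg v = 1 ∧ N.outDeg v = 1

/-- The digraph `Cov(N)` on the visible vertices of `N`: an arc `(u,v)` whenever
`u ≠ v`, `u →_N v`, and no visible vertex lies strictly between `u` and `v`. -/
def cov (N : Net V) : Net V where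
  verts := {v | N.Visible v}
  root := N.root
  arc u v := N.Visible u ∧ N.Visible v ∧ u ≠ v ∧ N.reach u v ∧
    ¬ ∃ w, N.Visible w ∧ w ≠ u ∧ w ≠ v ∧ N.reach u w ∧ N.reach w v

/-- The normalisation `Ñ` of `N`: obtained from `Cov(N)` by suppressing every
subdividing vertex.  Its vertices are the visible vertices of `N` that are not
subdividing in `Cov(N)`, with an arc `(u,v)` whenever `Cov(N)` has a directed path
from `u` to `v` (of length at least one) all of whose interior vertices are
subdividing in `Cov(N)`. -/
def normalise (N : Net V) : Net V where
  verts := {v | N.Visible v ∧ ¬ N.cov.Subdividing v}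
  root := N.root
  arc u v := (N.Visible u ∧ ¬ N.cov.Subdividing u) ∧ (N.Visible v ∧ ¬ N.cov.Subdividing v) ∧
    ∃ l : List V, N.cov.IsPathFrom u v l ∧ 2 ≤ l.length ∧
      ∀ w ∈ l.tail.dropLast, N.cov.Subdividing w

/-- `N` is a rooted phylogenetic network on the finite nonempty leaf set `X`. -/
structure IsPhylo (N : Net V) (X : Set V) : Prop where
  finite : N.verts.Finite
  nonempty : X.Nonempty
  arc_mem : ∀ ⦃u v : V⦄, N.arc u v → u ∈ N.verts ∧ v ∈ N.verts
  acyclic : ∀ ⦃u v : V⦄, N.arc u v → ¬ N.reach v u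
  root_mem : N.root ∈ N.verts
  root_inDeg : N.inDeg N.root = 0
  root_unique : ∀ v ∈ N.verts, N.inDeg v = 0 → v = N.root
  leaves_eq : N.leaves = X
  leaf_inDeg : ∀ x ∈ X, N.inDeg x = 1
  interior_deg : ∀ v ∈ N.verts, v ≠ N.root → v ∉ X →
    (N.inDeg v = 1 ∧ 2 ≤ N.outDeg v) ∨ (N.outDeg v = 1 ∧ 2 ≤ N.inDeg v)

/-- `N` has no shortcuts: no arc `(u,v)` such that there is also a directed path
from `u` to `v` of length at least 2 (i.e. a path-list with at least 3 entries). -/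
def NoShortcuts (N : Net V) : Prop :=
  ∀ u v : V, N.arc u v → ¬ ∃ l : List V, N.IsPathFrom u v l ∧ 3 ≤ l.length

/-- Tree-child: every vertex is visible. -/
def TreeChild (N : Net V) : Prop := ∀ v ∈ N.verts, N.Visible v

/-- Normal: tree-child with no shortcuts. -/
def Normal (N : Net V) : Prop := N.TreeChild ∧ N.NoShortcuts

/-- A tree: every vertex has in-degree at most 1. -/
def IsTree (N : Net V) : Prop := ∀ v ∈ N.verts, N.inDeg v ≤ 1

/-- The cluster of `v`: the set of leaves reachable from `v`. -/
def cluster (N : Net V) (v : V) : Set V := {x ∈ N.leaves | N.reach v x}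

/-- The identifying set of `v`: the set of leaves `x` such that every directed
path from the root to `x` passes through `v`. -/
def ident (N : Net V) (v : V) : Set V :=
  {x ∈ N.leaves | ∀ l : List V, N.IsPathFrom N.root x l → v ∈ l}

/-- A digraph isomorphism between two networks, given by the map `f`. -/
def NetEquiv (M : Net V) (M' : Net W) (f : V → W) : Prop :=
  Set.BijOn f M.verts M'.verts ∧
    ∀ u ∈ M.verts, ∀ v ∈ M.verts, (M.arc u v ↔ M'.arc (f u) (f v))

/-- Two networks over the same ambient type are equivalent relative to a leaf set
`X` if there is a digraph isomorphism between them fixing each element of `X`. -/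
def EquivOn (M M' : Net V) (X : Set V) : Prop :=
  ∃ f : V → V, NetEquiv M M' f ∧ ∀ x ∈ X, f x = x

/-- `N₁ ⊕ N₂` : disjoint copies of `N₁` and `N₂` under a new root (`none`). -/
def oplus {V₁ V₂ : Type*} (N₁ : Net V₁) (N₂ : Net V₂) : Net (Option (V₁ ⊕ V₂)) where
  verts := insert none
    ((fun v => some (Sum.inl v)) '' N₁.verts ∪ (fun v => some (Sum.inr v)) '' N₂.verts)
  root := none
  arc a b :=
    match a, b with
    | none, some (Sum.inl w) => w = N₁.root
    | none, some (Sum.inr w) => w = N₂.root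
    | some (Sum.inl u), some (Sum.inl w) => N₁.arc u w
    | some (Sum.inr u), some (Sum.inr w) => N₂.arc u w
    | _, _ => False

/-- `N₁ ⊗ N₂` : identify each leaf `x` of `N₁` with the root of its own copy of `N₂`;
the copy of a non-leaf vertex `u` of `N₁` is `Sum.inl u`, and the vertex `w` of the
copy of `N₂` attached at leaf `x` of `N₁` is `Sum.inr (x, w)`. -/
def otimes {V₁ V₂ : Type*} (N₁ : Net V₁) (N₂ : Net V₂) : Net (V₁ ⊕ V₁ × V₂) where
  verts := Sum.inl '' (N₁.verts \ N₁.leaves) ∪ Sum.inr '' (N₁.leaves ×ˢ N₂.verts)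
  root := Sum.inl N₁.root
  arc a b :=
    match a, b with
    | Sum.inl u, Sum.inl w => N₁.arc u w ∧ w ∉ N₁.leaves
    | Sum.inl u, Sum.inr (x, w) => x ∈ N₁.leaves ∧ N₁.arc u x ∧ w = N₂.root
    | Sum.inr (x, w), Sum.inr (x', w') => x = x' ∧ x ∈ N₁.leaves ∧ N₂.arc w w'
    | _, _ => False

end Net

/-- A hierarchy: a collection of sets any two of which are disjoint or nested. -/
def IsHierarchy {V : Type*} (C : Set (Set V)) : Prop :=
  ∀ A ∈ C, ∀ B ∈ C, A ∩ B = ∅ ∨ A ⊆ B ∨ B ⊆ A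


/-! ### Auxiliary lemmas for the proof of `stmt6` -/

namespace Net

section Aux

variable {V : Type*} {M N : Net V} {X : Set V}

lemma cov_arc_iff {u v : V} : N.cov.arc u v ↔
    (N.Visible u ∧ N.Visible v ∧ u ≠ v ∧ N.reach u v ∧
      ¬ ∃ w, N.Visible w ∧ w ≠ u ∧ w ≠ v ∧ N.reach u w ∧ N.reach w v) := Iff.rfl

lemma norm_arc_iff {u v : V} : N.normalise.arc u v ↔
    ((N.Visible u ∧ ¬ N.cov.Subdividing u) ∧ (N.Visible v ∧ ¬ N.cov.Subdividing v) ∧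
    ∃ l : List V, N.cov.IsPathFrom u v l ∧ 2 ≤ l.length ∧
      ∀ w ∈ l.tail.dropLast, N.cov.Subdividing w) := Iff.rfl

lemma IsPathFrom.exists_cons {u v : V} {l : List V} (h : M.IsPathFrom u v l) :
    ∃ t, l = u :: t := by
  obtain ⟨-, h2, -⟩ := h
  cases l with
  | nil => simp at h2
  | cons a t =>
    have : a = u := by simpa using h2
    exact ⟨t, by rw [this]⟩

lemma isPathFrom_singleton (M : Net V) (u : V) : M.IsPathFrom u u [u] :=
  ⟨List.isChain_singleton u, rfl, rfl⟩

lemma IsPathFrom.reach {u v : V} {l : List V} (h : M.IsPathFrom u v l) : M.reach u v := by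
  induction l generalizing u with
  | nil => exact absurd h.2.1 (by simp)
  | cons a t ih =>
    obtain ⟨hc, hh, hl⟩ := h
    have ha : a = u := by simpa using hh
    subst ha
    cases t with
    | nil =>
      have : a = v := by simpa using hl
      exact this ▸ Relation.ReflTransGen.refl
    | cons b t' =>
      have hc' := List.isChain_cons_cons.mp hc
      have hsub : M.IsPathFrom b v (b :: t') :=
        ⟨hc'.2, rfl, by simpa [List.getLast?_cons_cons] using hl⟩
      exact Relation.ReflTransGen.head hc'.1 (ih hsub)

lemma reach_iff_path {u v : V} : M.reach u v ↔ ∃ l, M.IsPathFrom u v l := by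
  constructor
  · intro h
    induction h using Relation.ReflTransGen.head_induction_on with
    | refl => exact ⟨[v], isPathFrom_singleton M v⟩
    | head hab _ ih =>
      obtain ⟨l, hl⟩ := ih
      obtain ⟨t, rfl⟩ := hl.exists_cons
      exact ⟨_ :: _ :: t, List.isChain_cons_cons.mpr ⟨hab, hl.1⟩, rfl,
        by simpa [List.getLast?_cons_cons] using hl.2.2⟩
  · rintro ⟨l, hl⟩; exact hl.reach

lemma IsPathFrom.reach_of_mem {u v z : V} {l : List V} (h : M.IsPathFrom u v l) (hz : z ∈ l) :
    M.reach u z ∧ M.reach z v := by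
  induction l generalizing u with
  | nil => simp at hz
  | cons a t ih =>
    obtain ⟨hc, hh, hl⟩ := h
    have ha : a = u := by simpa using hh
    subst ha
    rcases List.mem_cons.mp hz with rfl | hz'
    · exact ⟨Relation.ReflTransGen.refl, IsPathFrom.reach ⟨hc, hh, hl⟩⟩
    · cases t with
      | nil => simp at hz'
      | cons b t' =>
        have hc' := List.isChain_cons_cons.mp hc
        have hsub : M.IsPathFrom b v (b :: t') :=
          ⟨hc'.2, rfl, by simpa [List.getLast?_cons_cons] using hl⟩
        obtain ⟨h1, h2⟩ := ih hsub hz'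
        exact ⟨Relation.ReflTransGen.head hc'.1 h1, h2⟩

lemma IsPathFrom.append {u v w : V} {l1 l2 : List V}
    (h1 : M.IsPathFrom u v l1) (h2 : M.IsPathFrom v w l2) :
    M.IsPathFrom u w (l1 ++ l2.tail) := by
  obtain ⟨t2, rfl⟩ := h2.exists_cons
  obtain ⟨t1, rfl⟩ := h1.exists_cons
  cases t2 with
  | nil =>
    have hw : v = w := by simpa using h2.2.2
    subst hw
    simpa using h1
  | cons b t' =>
    have hvb : M.arc v b := (List.isChain_cons_cons.mp h2.1).1
    refine ⟨?_, ?_, ?_⟩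
    · refine List.IsChain.append h1.1 (List.isChain_cons_cons.mp h2.1).2 ?_
      intro x hx y hy
      have hx' : x = v := by
        have h22 := h1.2.2
        rw [h22] at hx
        simp at hx
        exact hx.symm
      have hy' : y = b := by
        simp at hy
        exact hy.symm
      rw [hx', hy']; exact hvb
    · rfl
    · show ((u :: t1) ++ (b :: t')).getLast? = some w
      rw [List.getLast?_append_of_ne_nil (l₁ := u :: t1) (by simp : (b :: t') ≠ [])]
      simpa [List.getLast?_cons_cons] using h2.2.2

lemma IsPathFrom.two_le {u v : V} {l : List V} (h : M.IsPathFrom u v l) (hlen : 2 ≤ l.length) :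
    ∃ c t, l = u :: c :: t ∧ M.arc u c ∧ M.IsPathFrom c v (c :: t) := by
  obtain ⟨t0, rfl⟩ := h.exists_cons
  cases t0 with
  | nil => simp at hlen
  | cons c t =>
    have hc := List.isChain_cons_cons.mp h.1
    exact ⟨c, t, rfl, hc.1, hc.2, rfl, by simpa [List.getLast?_cons_cons] using h.2.2⟩

lemma IsPathFrom.mem_cases {u v z : V} {l : List V} (h : M.IsPathFrom u v l) (hz : z ∈ l) :
    z = u ∨ z = v ∨ z ∈ l.tail.dropLast := by
  obtain ⟨t, rfl⟩ := h.exists_cons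
  rcases List.mem_cons.mp hz with rfl | hz'
  · exact Or.inl rfl
  · rcases eq_or_ne t [] with rfl | hne
    · simp at hz'
    · have hv : t.getLast hne = v := by
        have h2 := h.2.2
        have : (u :: t).getLast? = t.getLast? := by
          cases t with
          | nil => exact absurd rfl hne
          | cons b t' => exact List.getLast?_cons_cons
        rw [this, List.getLast?_eq_getLast hne] at h2
        exact Option.some.inj h2
      have := List.dropLast_append_getLast hne
      rw [← this] at hz'
      rcases List.mem_append.mp hz' with hz'' | hz''
      · exact Or.inr (Or.inr hz'')
      · have : z = t.getLast hne := by simpa using hz''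
        exact Or.inr (Or.inl (this.trans hv))

end Aux

section Phylo

variable {V : Type*} {N : Net V} {X : Set V}

namespace IsPhylo

lemma reach_antisymm (hN : N.IsPhylo X) {u v : V} (h1 : N.reach u v) (h2 : N.reach v u) :
    u = v := by
  rcases Relation.ReflTransGen.cases_head h1 with rfl | ⟨c, hac, hcv⟩
  · rfl
  · exact absurd (hcv.trans h2) (hN.acyclic hac)

lemma anc_finite (hN : N.IsPhylo X) (v : V) : {u | N.reach u v}.Finite := by
  refine (hN.finite.insert v).subset ?_
  intro u hu
  rcases Relation.ReflTransGen.cases_head hu with rfl | ⟨c, hac, _⟩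
  · exact Set.mem_insert _ _
  · exact Set.mem_insert_of_mem _ (hN.arc_mem hac).1

lemma reach_root (hN : N.IsPhylo X) {v : V} (hv : v ∈ N.verts) : N.reach N.root v := by
  suffices H : ∀ n v, v ∈ N.verts → {u | N.reach u v}.ncard ≤ n → N.reach N.root v from
    H _ v hv le_rfl
  intro n
  induction n with
  | zero =>
    intro v hv hle
    exfalso
    have h1 : 0 < {u | N.reach u v}.ncard := by
      rw [Set.ncard_pos (hN.anc_finite v)]
      exact ⟨v, Relation.ReflTransGen.refl⟩
    omega
  | succ n ih =>
    intro v hv hle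
    rcases eq_or_ne v N.root with rfl | hne
    · exact Relation.ReflTransGen.refl
    · have hex : ∃ u, N.arc u v := by
        by_contra hno
        push_neg at hno
        have hdeg : N.inDeg v = 0 := by
          have : {u | N.arc u v} = ∅ := by
            ext u; simpa using hno u
          show {u | N.arc u v}.ncard = 0
          rw [this]; simp
        exact hne (hN.root_unique v hv hdeg)
      obtain ⟨u, hu⟩ := hex
      have hu' : u ∈ N.verts := (hN.arc_mem hu).1
      have hsub : {t | N.reach t u} ⊂ {t | N.reach t v} := by
        constructor
        · intro t ht
          exact Relation.ReflTransGen.tail ht hu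
        · intro hss
          exact hN.acyclic hu (hss (show v ∈ {t | N.reach t v} from Relation.ReflTransGen.refl))
      have hlt := Set.ncard_lt_ncard hsub (hN.anc_finite v)
      exact Relation.ReflTransGen.tail (ih u hu' (by omega)) hu

lemma not_arc_leaf (hN : N.IsPhylo X) {y z : V} (hy : y ∈ N.leaves) : ¬ N.arc y z := by
  intro h
  have hfin : {w | N.arc y w}.Finite := hN.finite.subset (fun w hw => (hN.arc_mem hw).2)
  have hemp : {w | N.arc y w} = ∅ := (Set.ncard_eq_zero hfin).mp hy.2
  exact absurd (show z ∈ {w | N.arc y w} from h) (by simp [hemp])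

lemma leaf_reach_eq (hN : N.IsPhylo X) {y z : V} (hy : y ∈ N.leaves) (h : N.reach y z) :
    z = y := by
  rcases Relation.ReflTransGen.cases_head h with rfl | ⟨c, hac, _⟩
  · rfl
  · exact absurd hac (hN.not_arc_leaf hy)

lemma leaf_visible {y : V} (hy : y ∈ N.leaves) : N.Visible y := by
  refine ⟨hy.1, y, hy, fun l hl => ?_⟩
  have h2 := hl.2.2
  cases l with
  | nil => simp at h2
  | cons a t =>
    rcases eq_or_ne t [] with rfl | hne
    · have : a = y := by simpa using h2
      simp [this]
    · have : (a :: t).getLast? = t.getLast? := by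
        cases t with
        | nil => exact absurd rfl hne
        | cons b t' => exact List.getLast?_cons_cons
      rw [this, List.getLast?_eq_getLast hne] at h2
      have := List.getLast_mem hne
      rw [Option.some.inj h2] at this
      exact List.mem_cons_of_mem _ this

lemma leaf_not_subdiv (hN : N.IsPhylo X) {y : V} (hy : y ∈ N.leaves) :
    ¬ N.cov.Subdividing y := by
  rintro ⟨-, hs⟩
  obtain ⟨x, hx⟩ := Set.ncard_eq_one.mp hs
  have harc : N.cov.arc y x := by
    have : x ∈ {w | N.cov.arc y w} := by rw [hx]; exact rfl
    exact this
  obtain ⟨-, -, hne, hr, -⟩ := cov_arc_iff.mp harc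
  exact hne ((hN.leaf_reach_eq hy hr).symm)

lemma cov_reach_reach {u v : V} (h : Relation.ReflTransGen N.cov.arc u v) : N.reach u v := by
  induction h with
  | refl => exact Relation.ReflTransGen.refl
  | tail _ hbc ih => exact ih.trans (cov_arc_iff.mp hbc).2.2.2.1

lemma cov_reach_of_reach (hN : N.IsPhylo X) {u v : V} (hu : N.Visible u) (hv : N.Visible v)
    (h : N.reach u v) : Relation.ReflTransGen N.cov.arc u v := by
  suffices H : ∀ n u v, N.Visible u → N.Visible v → N.reach u v →
      {t | N.Visible t ∧ N.reach u t ∧ N.reach t v}.ncard ≤ n →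
      Relation.ReflTransGen N.cov.arc u v from H _ u v hu hv h le_rfl
  intro n
  induction n with
  | zero =>
    intro u v hu hv h hle
    exfalso
    have hfin : {t | N.Visible t ∧ N.reach u t ∧ N.reach t v}.Finite :=
      hN.finite.subset (fun t ht => ht.1.1)
    have : 0 < {t | N.Visible t ∧ N.reach u t ∧ N.reach t v}.ncard := by
      rw [Set.ncard_pos hfin]
      exact ⟨u, hu, Relation.ReflTransGen.refl, h⟩
    omega
  | succ n ih =>
    intro u v hu hv h hle
    rcases eq_or_ne u v with rfl | hne
    · exact Relation.ReflTransGen.refl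
    by_cases hc : N.cov.arc u v
    · exact Relation.ReflTransGen.single hc
    have hex : ∃ w, N.Visible w ∧ w ≠ u ∧ w ≠ v ∧ N.reach u w ∧ N.reach w v := by
      by_contra hno
      exact hc (cov_arc_iff.mpr ⟨hu, hv, hne, h, hno⟩)
    obtain ⟨w, hw, hwu, hwv, huw, hwv'⟩ := hex
    have hfin : {t | N.Visible t ∧ N.reach u t ∧ N.reach t v}.Finite :=
      hN.finite.subset (fun t ht => ht.1.1)
    have hsub1 : {t | N.Visible t ∧ N.reach u t ∧ N.reach t w} ⊂
        {t | N.Visible t ∧ N.reach u t ∧ N.reach t v} := by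
      constructor
      · rintro t ⟨h1, h2, h3⟩
        exact ⟨h1, h2, h3.trans hwv'⟩
      · intro hss
        have hmem := hss (show v ∈ _ from ⟨hv, h, Relation.ReflTransGen.refl⟩)
        exact hwv (hN.reach_antisymm hwv' hmem.2.2)
    have hsub2 : {t | N.Visible t ∧ N.reach w t ∧ N.reach t v} ⊂
        {t | N.Visible t ∧ N.reach u t ∧ N.reach t v} := by
      constructor
      · rintro t ⟨h1, h2, h3⟩
        exact ⟨h1, huw.trans h2, h3⟩
      · intro hss
        have hmem := hss (show u ∈ _ from ⟨hu, Relation.ReflTransGen.refl, h⟩)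
        exact hwu (hN.reach_antisymm huw hmem.2.1).symm
    have hlt1 := Set.ncard_lt_ncard hsub1 hfin
    have hlt2 := Set.ncard_lt_ncard hsub2 hfin
    exact (ih u w hu hw huw (by omega)).trans (ih w v hw hv hwv' (by omega))

lemma cov_out_eq (hN : N.IsPhylo X) {a b c : V} (hs : N.cov.Subdividing a)
    (h1 : N.cov.arc a b) (h2 : N.cov.arc a c) : b = c := by
  obtain ⟨x, hx⟩ := Set.ncard_eq_one.mp hs.2
  have hb : b ∈ {w | N.cov.arc a w} := h1
  have hc : c ∈ {w | N.cov.arc a w} := h2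
  rw [hx] at hb hc
  simp at hb hc
  rw [hb, hc]

lemma cov_in_eq (hN : N.IsPhylo X) {a b c : V} (hs : N.cov.Subdividing a)
    (h1 : N.cov.arc b a) (h2 : N.cov.arc c a) : b = c := by
  obtain ⟨x, hx⟩ := Set.ncard_eq_one.mp hs.1
  have hb : b ∈ {w | N.cov.arc w a} := h1
  have hc : c ∈ {w | N.cov.arc w a} := h2
  rw [hx] at hb hc
  simp at hb hc
  rw [hb, hc]

lemma reach_of_subdiv_out (hN : N.IsPhylo X) {a b z : V} (hs : N.cov.Subdividing a)
    (hab : N.cov.arc a b) (hz : N.Visible z) (hza : z ≠ a) (h : N.reach a z) :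
    N.reach b z := by
  have ha : N.Visible a := (cov_arc_iff.mp hab).1
  have hrtg := hN.cov_reach_of_reach ha hz h
  rcases Relation.ReflTransGen.cases_head hrtg with rfl | ⟨c, hac, hcz⟩
  · exact absurd rfl hza
  · have : c = b := hN.cov_out_eq hs hac hab
    subst this
    exact cov_reach_reach hcz

lemma reach_of_subdiv_in (hN : N.IsPhylo X) {a p z : V} (hs : N.cov.Subdividing a)
    (hpa : N.cov.arc p a) (hz : N.Visible z) (hza : z ≠ a) (h : N.reach z a) :
    N.reach z p := by
  have ha : N.Visible a := (cov_arc_iff.mp hpa).2.1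
  have hrtg := hN.cov_reach_of_reach hz ha h
  rcases Relation.ReflTransGen.cases_tail hrtg with rfl | ⟨c, hzc, hca⟩
  · exact absurd rfl hza
  · have : c = p := hN.cov_in_eq hs hca hpa
    subst this
    exact cov_reach_reach hzc

lemma visible_reach_leaf (hN : N.IsPhylo X) {v : V} (hv : N.Visible v) :
    ∃ y ∈ N.leaves, (∀ l, N.IsPathFrom N.root y l → v ∈ l) ∧ N.reach v y := by
  obtain ⟨hvm, y, hy, hall⟩ := hv
  have hroot : N.reach N.root y := hN.reach_root hy.1
  obtain ⟨l, hl⟩ := reach_iff_path.mp hroot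
  exact ⟨y, hy, hall, (hl.reach_of_mem (hall l hl)).2⟩

lemma push_along (hN : N.IsPhylo X) : ∀ (l : List V) (b e t : V), N.cov.IsPathFrom b e l →
    (∀ z ∈ l.dropLast, N.cov.Subdividing z) → N.Visible t → ¬ N.cov.Subdividing t →
    N.reach b t → N.reach e t := by
  intro l
  induction l with
  | nil =>
    intro b e t h _ _ _ _
    exact absurd h.2.1 (by simp)
  | cons a r ih =>
    intro b e t h hsub hvt hnst hbt
    have hab : a = b := by simpa using h.2.1
    subst hab
    cases r with
    | nil =>
      have : a = e := by simpa using h.2.2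
      exact this ▸ hbt
    | cons c r' =>
      have hs : N.cov.Subdividing a := hsub a (by simp)
      have hc := List.isChain_cons_cons.mp h.1
      have htna : t ≠ a := fun he => hnst (he ▸ hs)
      have hct : N.reach c t := hN.reach_of_subdiv_out hs hc.1 hvt htna hbt
      refine ih c e t ⟨hc.2, rfl, by simpa [List.getLast?_cons_cons] using h.2.2⟩ ?_ hvt hnst hct
      intro z hz
      refine hsub z ?_
      cases r' with
      | nil => simp at hz
      | cons d r'' => exact List.mem_cons_of_mem _ hz

lemma norm_arc (hN : N.IsPhylo X) {u v : V} (h : N.normalise.arc u v) :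
    N.Visible u ∧ N.Visible v ∧ ¬N.cov.Subdividing u ∧ ¬N.cov.Subdividing v ∧
      N.reach u v ∧ u ≠ v := by
  obtain ⟨⟨hvu, hsu⟩, ⟨hvv, hsv⟩, l, hl, hlen, hint⟩ := norm_arc_iff.mp h
  obtain ⟨c, t, rfl, hac, hrest⟩ := hl.two_le hlen
  obtain ⟨-, -, hneuc, hruc, -⟩ := cov_arc_iff.mp hac
  have hrcv : N.reach c v := cov_reach_reach hrest.reach
  refine ⟨hvu, hvv, hsu, hsv, hruc.trans hrcv, ?_⟩
  rintro rfl
  exact hneuc (hN.reach_antisymm hruc hrcv)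

lemma norm_reach_reach (hN : N.IsPhylo X) {u v : V}
    (h : Relation.ReflTransGen N.normalise.arc u v) : N.reach u v := by
  induction h with
  | refl => exact Relation.ReflTransGen.refl
  | tail _ hbc ih => exact ih.trans (hN.norm_arc hbc).2.2.2.2.1

/-- The key lemma: a visible non-subdividing vertex lying (in `N`) between the endpoints
of an arc of the normalisation must be one of the endpoints. -/
lemma key (hN : N.IsPhylo X) {u v w : V} (h : N.normalise.arc u v)
    (hvw : N.Visible w) (hnsw : ¬ N.cov.Subdividing w)
    (huw : N.reach u w) (hwv : N.reach w v) : w = u ∨ w = v := by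
  by_contra hcon
  push_neg at hcon
  obtain ⟨hwu, hwnev⟩ := hcon
  obtain ⟨⟨hvu, hsu⟩, ⟨hvv, hsv⟩, A, hA, hAlen, hAint⟩ := norm_arc_iff.mp h
  obtain ⟨a1, A', rfl, hua1, hA'⟩ := hA.two_le hAlen
  obtain ⟨-, hva1, hneua1, hrua1, hno⟩ := cov_arc_iff.mp hua1
  cases A' with
  | nil =>
    have hva : a1 = v := by simpa using hA'.2.2
    subst hva
    exact hno ⟨w, hvw, hwu, hwnev, huw, hwv⟩
  | cons a2 A'' =>
    have hintA : ∀ z ∈ (a1 :: a2 :: A'').dropLast, N.cov.Subdividing z := by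
      intro z hz
      exact hAint z hz
    have hsa1 : N.cov.Subdividing a1 := hintA a1 (by simp)
    -- get the first step of a cov-path from u towards w
    have hrtg := hN.cov_reach_of_reach hvu hvw huw
    rcases Relation.ReflTransGen.cases_head hrtg with rfl | ⟨c1, huc1, hc1w⟩
    · exact hwu rfl
    obtain ⟨-, hvc1, hneuc1, hruc1, hnoc1⟩ := cov_arc_iff.mp huc1
    have hrc1w : N.reach c1 w := cov_reach_reach hc1w
    have hrc1v : N.reach c1 v := hrc1w.trans hwv
    -- identifying leaf of a1
    obtain ⟨y1, hy1, hall1, ha1y1⟩ := hN.visible_reach_leaf hva1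
    have hvy1 : N.Visible y1 := leaf_visible hy1
    have hnsy1 : ¬ N.cov.Subdividing y1 := hN.leaf_not_subdiv hy1
    have hrvy1 : N.reach v y1 := hN.push_along _ a1 v y1 hA' hintA hvy1 hnsy1 ha1y1
    -- big path from the root through u, c1, v to y1
    have hru : N.reach N.root u := hN.reach_root hvu.1
    obtain ⟨P1, hP1⟩ := reach_iff_path.mp hru
    obtain ⟨P2, hP2⟩ := reach_iff_path.mp hruc1
    obtain ⟨P3, hP3⟩ := reach_iff_path.mp hrc1v
    obtain ⟨P4, hP4⟩ := reach_iff_path.mp hrvy1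
    have hbig := ((hP1.append hP2).append hP3).append hP4
    have ha1mem := hall1 _ hbig
    have ha1eqc1 : a1 = c1 := by
      rcases List.mem_append.mp ha1mem with h123 | h4
      · rcases List.mem_append.mp h123 with h12 | h3
        · rcases List.mem_append.mp h12 with h1 | h2
          · -- a1 on root→u : cycle
            exfalso
            have := (hP1.reach_of_mem h1).2
            exact hneua1 (hN.reach_antisymm hrua1 this)
          · -- a1 on u→c1
            have h2' := List.mem_of_mem_tail h2
            have hr := hP2.reach_of_mem h2'
            by_contra hne
            exact hnoc1 ⟨a1, hva1, fun he => hneua1 he.symm, hne, hrua1, hr.2⟩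
        · -- a1 on c1→v
          have h3' := List.mem_of_mem_tail h3
          have hr := hP3.reach_of_mem h3'
          by_contra hne
          have hrc1u : N.reach c1 u :=
            hN.reach_of_subdiv_in hsa1 hua1 hvc1 (fun he => hne he.symm) hr.1
          exact hneuc1 (hN.reach_antisymm hruc1 hrc1u)
      · -- a1 on v→y1 : cycle with a1 → v
        exfalso
        have h4' := List.mem_of_mem_tail h4
        have hr := hP4.reach_of_mem h4'
        have hra1v : N.reach a1 v := cov_reach_reach hA'.reach
        have : a1 = v := hN.reach_antisymm hra1v hr.1
        exact hsv (this ▸ hsa1)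
    subst ha1eqc1
    -- now push `w` along the cov-path from a1 to v
    have hvw' : N.reach v w := hN.push_along _ a1 v w hA' hintA hvw hnsw hrc1w
    exact hwnev (hN.reach_antisymm hwv hvw')

lemma cov_arc_path (hN : N.IsPhylo X) {a b : V} (h : N.cov.arc a b) :
    ∃ L, N.IsPathFrom a b L ∧ ∀ z, N.Visible z → z ∈ L → z = a ∨ z = b := by
  obtain ⟨hva, hvb, hne, hr, hno⟩ := cov_arc_iff.mp h
  obtain ⟨L, hL⟩ := reach_iff_path.mp hr
  refine ⟨L, hL, fun z hz hzL => ?_⟩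
  by_contra hcon
  push_neg at hcon
  exact hno ⟨z, hz, hcon.1, hcon.2, (hL.reach_of_mem hzL).1, (hL.reach_of_mem hzL).2⟩

lemma covpath_path (hN : N.IsPhylo X) : ∀ (l : List V) (x y : V), N.cov.IsPathFrom x y l →
    (∀ z ∈ l.tail.dropLast, N.cov.Subdividing z) →
    ∃ L, N.IsPathFrom x y L ∧
      ∀ z, N.Visible z → ¬N.cov.Subdividing z → z ∈ L → z = x ∨ z = y := by
  intro l
  induction l with
  | nil =>
    intro x y h _
    exact absurd h.2.1 (by simp)
  | cons a r ih =>
    intro x y h hsub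
    have hax : a = x := by simpa using h.2.1
    subst hax
    cases r with
    | nil =>
      have : a = y := by simpa using h.2.2
      subst this
      exact ⟨[a], isPathFrom_singleton N a, fun z _ _ hz => Or.inl (by simpa using hz)⟩
    | cons c r' =>
      have hc := List.isChain_cons_cons.mp h.1
      obtain ⟨L1, hL1, hP1⟩ := hN.cov_arc_path hc.1
      have hrest : N.cov.IsPathFrom c y (c :: r') :=
        ⟨hc.2, rfl, by simpa [List.getLast?_cons_cons] using h.2.2⟩
      have hcy : c = y ∨ N.cov.Subdividing c := by
        cases r' with
        | nil => exact Or.inl (by simpa using hrest.2.2)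
        | cons d r'' =>
          refine Or.inr (hsub c ?_)
          simp
      have hsub' : ∀ z ∈ (c :: r').tail.dropLast, N.cov.Subdividing z := by
        intro z hz
        refine hsub z ?_
        show z ∈ (c :: r').dropLast
        cases r' with
        | nil => simp at hz
        | cons d r'' => exact List.mem_cons_of_mem _ (by simpa using hz)
      obtain ⟨L2, hL2, hP2⟩ := ih c y hrest hsub'
      refine ⟨L1 ++ L2.tail, hL1.append hL2, fun z hz hnz hzm => ?_⟩
      rcases List.mem_append.mp hzm with hz1 | hz2
      · rcases hP1 z hz hz1 with h' | h'
        · exact Or.inl h'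
        · rcases hcy with hcy' | hs
          · exact Or.inr (h'.trans hcy')
          · exact absurd (h' ▸ hs) hnz
      · rcases hP2 z hz hnz (List.mem_of_mem_tail hz2) with h' | h'
        · rcases hcy with hcy' | hs
          · exact Or.inr (h'.trans hcy')
          · exact absurd (h' ▸ hs) hnz
        · exact Or.inr h'


lemma normpath_path (hN : N.IsPhylo X) : ∀ (l : List V) (x y : V),
    N.normalise.IsPathFrom x y l →
    ∃ L, N.IsPathFrom x y L ∧ ∀ z, N.Visible z → ¬N.cov.Subdividing z → z ∈ L → z ∈ l := by
  intro l
  induction l with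
  | nil =>
    intro x y h
    exact absurd h.2.1 (by simp)
  | cons a r ih =>
    intro x y h
    have hax : a = x := by simpa using h.2.1
    subst hax
    cases r with
    | nil =>
      have : a = y := by simpa using h.2.2
      subst this
      exact ⟨[a], isPathFrom_singleton N a, fun z _ _ hz => by simpa using hz⟩
    | cons c r' =>
      have hc := List.isChain_cons_cons.mp h.1
      obtain ⟨-, -, l', hl', hlen', hint'⟩ := norm_arc_iff.mp hc.1
      obtain ⟨L1, hL1, hP1⟩ := hN.covpath_path l' a c hl' hint'
      have hrest : N.normalise.IsPathFrom c y (c :: r') :=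
        ⟨hc.2, rfl, by simpa [List.getLast?_cons_cons] using h.2.2⟩
      obtain ⟨L2, hL2, hP2⟩ := ih c y hrest
      refine ⟨L1 ++ L2.tail, hL1.append hL2, fun z hz hnz hzm => ?_⟩
      rcases List.mem_append.mp hzm with hz1 | hz2
      · rcases hP1 z hz hnz hz1 with rfl | rfl
        · exact List.mem_cons_self
        · exact List.mem_cons_of_mem _ (List.mem_cons_self)
      · exact List.mem_cons_of_mem _ (hP2 z hz hnz (List.mem_of_mem_tail hz2))

lemma leaf_norm (hN : N.IsPhylo X) {y : V} (hy : y ∈ N.leaves) :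
    y ∈ N.normalise.leaves := by
  have hv := leaf_visible hy (N := N)
  have hns := hN.leaf_not_subdiv hy
  refine ⟨⟨hv, hns⟩, ?_⟩
  have hemp : {z | N.normalise.arc y z} = ∅ := by
    ext z
    simp only [Set.mem_setOf_eq, Set.mem_empty_iff_false, iff_false]
    intro h
    obtain ⟨-, -, -, -, hr, hne⟩ := hN.norm_arc h
    exact hne (hN.leaf_reach_eq hy hr).symm
  show {z | N.normalise.arc y z}.ncard = 0
  rw [hemp]
  simp

end IsPhylo

end Phylo

end Net

/-- The normalisation `Ñ` of a rooted phylogenetic network is a normal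
network: every vertex of `Ñ` is visible in `Ñ`, and `Ñ` has no shortcuts. -/
theorem stmt6 {V : Type*} (N : Net V) (X : Set V) (hN : N.IsPhylo X) :
    N.normalise.TreeChild ∧ N.normalise.NoShortcuts := by
  constructor
  · -- tree-child
    intro v hv
    obtain ⟨hvis, hns⟩ := hv
    obtain ⟨y0, hy0, hall, -⟩ := hN.visible_reach_leaf hvis
    refine ⟨⟨hvis, hns⟩, y0, hN.leaf_norm hy0, fun l hl => ?_⟩
    obtain ⟨L, hL, hP⟩ := hN.normpath_path l N.normalise.root y0 hl
    exact hP v hvis hns (hall L hL)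
  · -- no shortcuts
    rintro u v harc ⟨l, hl, hlen⟩
    obtain ⟨w, t, rfl, harc1, hrest⟩ := hl.two_le (by omega)
    have hlen' : 2 ≤ (w :: t).length := by
      simp only [List.length_cons] at hlen ⊢
      omega
    obtain ⟨z, t', -, harc2, hrest2⟩ := hrest.two_le hlen'
    obtain ⟨-, -, -, -, hruw, hneuw⟩ := hN.norm_arc harc1
    obtain ⟨hvw, -, hnsw, -, hrwz, hnewz⟩ := hN.norm_arc harc2
    have hrzv : N.reach z v := hN.norm_reach_reach hrest2.reach
    have hrwv : N.reach w v := hrwz.trans hrzv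
    have hwnev : w ≠ v := by
      rintro rfl
      exact hnewz (hN.reach_antisymm hrwz hrzv)
    rcases hN.key harc hvw hnsw hruw hrwv with rfl | rfl
    · exact hneuw rfl
    · exact hwnev rfl
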